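/- Suppose α ∈ (0,1) and A is an anchor set, i.e., a measurable set with p_n(x) = 0 and p_p(x) > 0 for all x ∈ A and ∫_A p_p dμ ≥ γ for some γ > 0. Then for every x ∈ A one has τ(x) = 1/α, and for every x′ with p_n(x′) > 0 one has τ(x′) < 1/α; consequently, for any strictly increasing g : ℝ → [0,1], the scoring function f = g ∘ τ satisfies the pure positive bin property at threshold c = g(1/α): P_p({x : f(x) ≥ c}) ≥ γ and P_n({x : f(x) ≥ c}) = 0. Thus any monotonic transformation of the Bayes-optimal positive-versus-unlabeled scoring function induces a pure positive top bin with ε_p ≥ γ. -/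

import Mathlib

open MeasureTheory

/-- Anchor sets and the Bayes-optimal positive-versus-unlabeled scoring function: on an anchor
set `A` the score `τ` equals `1/α`, off the negative support boundary it is strictly smaller,
and hence any strictly increasing transformation `g ∘ τ` has a pure positive top bin at
threshold `c = g(1/α)` with mass at least `γ` under `P_p` and mass `0` under `P_n`. -/
theorem anchor_set_pure_positive_bin {X : Type*} [MeasurableSpace X] (μ : Measure X)
    (pp pn : X → ℝ) (hpp_m : Measurable pp) (hpn_m : Measurable pn)
    (hpp_nonneg : ∀ x, 0 ≤ pp x) (hpn_nonneg : ∀ x, 0 ≤ pn x)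
    (Pp Pn : Measure X)
    (hPp : Pp = μ.withDensity (fun x => ENNReal.ofReal (pp x)))
    (hPn : Pn = μ.withDensity (fun x => ENNReal.ofReal (pn x)))
    [IsProbabilityMeasure Pp] [IsProbabilityMeasure Pn]
    (α : ℝ) (hα : α ∈ Set.Ioo (0:ℝ) 1)
    (τ : X → ℝ)
    (hτ : τ = fun x => if 0 < pp x then pp x / (α * pp x + (1 - α) * pn x) else 0)
    (A : Set X) (hA : MeasurableSet A)
    (hA_neg : ∀ x ∈ A, pn x = 0) (hA_pos : ∀ x ∈ A, 0 < pp x)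
    (γ : ℝ) (hγ : 0 < γ) (hA_mass : γ ≤ ∫ x in A, pp x ∂μ) :
    (∀ x ∈ A, τ x = 1 / α) ∧
      (∀ x', 0 < pn x' → τ x' < 1 / α) ∧
      (∀ g : ℝ → ℝ, StrictMono g → (∀ t, g t ∈ Set.Icc (0:ℝ) 1) →
        ENNReal.ofReal γ ≤ Pp {x | g (1 / α) ≤ g (τ x)} ∧
          Pn {x | g (1 / α) ≤ g (τ x)} = 0) := by
  obtain ⟨hα0, hα1⟩ := hα
  have hτA : ∀ x ∈ A, τ x = 1 / α := by
    intro x hx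
    rw [hτ]
    simp only [hA_pos x hx, if_pos]
    rw [hA_neg x hx]
    have := (hA_pos x hx).ne'
    field_simp
    ring
  have hτlt : ∀ x', 0 < pn x' → τ x' < 1 / α := by
    intro x hx
    rw [hτ]
    by_cases h : 0 < pp x
    · simp only [h, if_pos]
      rw [div_lt_div_iff₀ (by nlinarith) hα0]
      nlinarith
    · simp only [h, if_neg, not_false_iff]
      simp [h]
      positivity
  refine ⟨hτA, hτlt, ?_⟩
  intro g hg hg01
  have hτm : Measurable τ := by
    rw [hτ]
    exact Measurable.ite (measurableSet_lt measurable_const hpp_m)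
      (hpp_m.div ((hpp_m.const_mul α).add (hpn_m.const_mul (1 - α)))) measurable_const
  have hS : {x | g (1 / α) ≤ g (τ x)} = {x | 1 / α ≤ τ x} := by
    ext x; simp [hg.le_iff_le]
  rw [hS]
  have hSm : MeasurableSet {x | 1 / α ≤ τ x} := measurableSet_le measurable_const hτm
  constructor
  · have hAS : A ⊆ {x | 1 / α ≤ τ x} := fun x hx => le_of_eq (hτA x hx).symm
    refine le_trans ?_ (measure_mono hAS)
    rw [hPp, withDensity_apply _ hA]
    rw [integral_eq_lintegral_of_nonneg_ae (Filter.Eventually.of_forall hpp_nonneg)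
      hpp_m.aestronglyMeasurable] at hA_mass
    calc ENNReal.ofReal γ
        ≤ ENNReal.ofReal ((∫⁻ x in A, ENNReal.ofReal (pp x) ∂μ).toReal) :=
          ENNReal.ofReal_le_ofReal hA_mass
      _ ≤ ∫⁻ x in A, ENNReal.ofReal (pp x) ∂μ := ENNReal.ofReal_toReal_le
  · rw [hPn, withDensity_apply _ hSm]
    have hz : ∀ x ∈ {x | 1 / α ≤ τ x}, ENNReal.ofReal (pn x) = 0 := by
      intro x hx
      rcases lt_or_eq_of_le (hpn_nonneg x) with h | h
      · exact absurd hx (not_le.mpr (hτlt x h))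
      · simp [← h]
    calc ∫⁻ x in {x | 1 / α ≤ τ x}, ENNReal.ofReal (pn x) ∂μ
        = ∫⁻ _ in {x | 1 / α ≤ τ x}, 0 ∂μ :=
          setLIntegral_congr_fun hSm hz
      _ = 0 := lintegral_zero
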